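/- arXiv:1509.03798 — 5 statements merged into one kernel-verified Lean document; each statement's English description precedes it below -/
import Mathlib

section
/- Let K be an Archimedean totally ordered field with no proper Archimedean ordered field extension (Hilbert complete). Then K is Dedekind complete. -/
/-- A Hilbert complete Archimedean ordered field (one with no proper Archimedean ordered
field extension) is Dedekind complete. -/
theorem hilbert_complete_implies_dedekind_complete
    {K : Type} [Field K] [LinearOrder K] [IsStrictOrderedRing K]
    (harchK : ∀ x : K, ∃ n : ℕ, |x| ≤ n)
    (hHilbert : ∀ (A : Type) [Field A] [LinearOrder A] [IsStrictOrderedRing A],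
      (∀ x : A, ∃ n : ℕ, |x| ≤ n) →
      ∀ f : K →+* A, StrictMono f → Function.Surjective f) :
    ∀ S : Set K, S.Nonempty → BddAbove S → ∃ a : K, IsLUB S a := by
  have harch : Archimedean K := by
    refine archimedean_iff_nat_le.2 fun x => ?_
    obtain ⟨n, hn⟩ := harchK x
    exact ⟨n, (le_abs_self x).trans hn⟩
  let F := LinearOrderedField.inducedOrderRingHom K ℝ
  have hmono : StrictMono F := (OrderHomClass.monotone F).strictMono_of_injective F.toRingHom.injective
  have hsurj : Function.Surjective F :=
    hHilbert ℝ (fun x => (exists_nat_ge |x|).imp fun n h => h) F.toRingHom hmono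
  have e : K ≃o ℝ := hmono.orderIsoOfSurjective _ hsurj
  intro S hS hbdd
  obtain ⟨b, hb⟩ := hS
  have h1 : (e '' S).Nonempty := ⟨e b, Set.mem_image_of_mem _ hb⟩
  have h2 : BddAbove (e '' S) := by
    obtain ⟨u, hu⟩ := hbdd
    exact ⟨e u, fun y ⟨x, hx, hxy⟩ => hxy ▸ e.monotone (hu hx)⟩
  have hlub : IsLUB (e '' S) (sSup (e '' S)) := isLUB_csSup h1 h2
  exact ⟨e.symm (sSup (e '' S)), e.isLUB_image.1 hlub⟩
end

section
/- Let K be a totally ordered field that is Cantor κ-complete for some uncountable cardinal κ > card(K), meaning every family of fewer than κ closed bounded intervals with the finite intersection property has nonempty intersection. Then K is Archimedean. -/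
/-- If a totally ordered field `K` is Cantor `κ`-complete for some uncountable cardinal
`κ > card K`, then `K` is Archimedean. -/
theorem cantor_kappa_complete_implies_archimedean
    {K : Type} [Field K] [LinearOrder K] [IsStrictOrderedRing K] (κ : Cardinal)
    (huncount : Cardinal.aleph0 < κ)
    (hcard : Cardinal.mk K < κ)
    (hcantor : ∀ (Γ : Type), Cardinal.mk Γ < κ → ∀ a b : Γ → K,
      (∀ s : Finset Γ, ∃ x : K, ∀ γ ∈ s, x ∈ Set.Icc (a γ) (b γ)) →
      ∃ x : K, ∀ γ : Γ, x ∈ Set.Icc (a γ) (b γ)) :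
    ∀ x : K, ∃ n : ℕ, |x| ≤ n := by
  classical
  by_contra h
  push_neg at h
  obtain ⟨x, hx⟩ := h
  have hx0 : ∀ n : ℕ, (n : K) < |x| := hx
  let m : K → ℕ := fun y => if h : ∀ n : ℕ, (n : K) ≤ y then 0
    else Classical.choose (not_forall.mp h)
  have hm : ∀ y : K, ¬ (∀ n : ℕ, (n : K) ≤ y) → y < (m y : K) := by
    intro y hy
    have := Classical.choose_spec (not_forall.mp hy)
    simp only [m, dif_neg hy]
    exact lt_of_not_ge this
  let a : K → K := fun y => (m y : K)
  let b : K → K := fun y => if ∀ n : ℕ, (n : K) ≤ y then y - 1 else |x|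
  have hbinf : ∀ y : K, ∀ n : ℕ, (n : K) ≤ b y := by
    intro y n
    by_cases hy : ∀ n : ℕ, (n : K) ≤ y
    · simp only [b, if_pos hy]
      have := hy (n + 1)
      push_cast at this
      linarith
    · simp only [b, if_neg hy]
      exact (hx0 n).le
  have hFIP : ∀ s : Finset K, ∃ w : K, ∀ γ ∈ s, w ∈ Set.Icc (a γ) (b γ) := by
    intro s
    refine ⟨((s.sup m : ℕ) : K), ?_⟩
    intro γ hγ
    constructor
    · exact_mod_cast Nat.cast_le.mpr (Finset.le_sup hγ)
    · exact hbinf γ _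
  obtain ⟨z, hz⟩ := hcantor K hcard a b hFIP
  have hzz := hz z
  by_cases hzinf : ∀ n : ℕ, (n : K) ≤ z
  · have hb : b z = z - 1 := if_pos hzinf
    have h2 := hzz.2
    rw [hb] at h2
    linarith
  · have ha := hm z hzinf
    have h1 := hzz.1
    simp only [a] at h1
    linarith
end

section
/- Let K be a totally ordered field and κ an uncountable cardinal. Then K is algebraically κ-saturated (every family of fewer than κ bounded open intervals with the finite intersection property has nonempty intersection) if and only if K is Cantor κ-complete (same property for closed bounded intervals) and κ ≤ cof(K), where cof(K) is the cofinality of K, i.e., the least cardinality of an unbounded-above subset of K. -/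
private lemma prod_card_lt {κ : Cardinal} (huncount : Cardinal.aleph0 < κ)
    {Γ : Type} (h : Cardinal.mk Γ < κ) : Cardinal.mk (Γ × Γ) < κ := by
  rw [Cardinal.mk_prod]
  simp only [Cardinal.lift_id]
  exact Cardinal.mul_lt_of_lt huncount.le h h

/-- For an uncountable cardinal `κ`, a totally ordered field is algebraically
`κ`-saturated iff it is Cantor `κ`-complete and `κ ≤ cof K` (i.e., every subset of
cardinality `< κ` is bounded above). -/
theorem saturated_iff_cantor_complete_and_cofinality
    {K : Type} [Field K] [LinearOrder K] [IsStrictOrderedRing K] (κ : Cardinal)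
    (huncount : Cardinal.aleph0 < κ) :
    (∀ (Γ : Type), Cardinal.mk Γ < κ → ∀ a b : Γ → K,
      (∀ s : Finset Γ, ∃ x : K, ∀ γ ∈ s, x ∈ Set.Ioo (a γ) (b γ)) →
      ∃ x : K, ∀ γ : Γ, x ∈ Set.Ioo (a γ) (b γ)) ↔
    ((∀ (Γ : Type), Cardinal.mk Γ < κ → ∀ a b : Γ → K,
      (∀ s : Finset Γ, ∃ x : K, ∀ γ ∈ s, x ∈ Set.Icc (a γ) (b γ)) →
      ∃ x : K, ∀ γ : Γ, x ∈ Set.Icc (a γ) (b γ)) ∧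
     (∀ A : Set K, Cardinal.mk A < κ → BddAbove A)) := by
  classical
  constructor
  · intro hS
    constructor
    · -- Cantor completeness from saturation
      intro Γ hΓ a b hfip
      have aleb : ∀ γ δ : Γ, a γ ≤ b δ := by
        intro γ δ
        obtain ⟨x, hx⟩ := hfip {γ, δ}
        have h1 := hx γ (by simp)
        have h2 := hx δ (by simp)
        exact h1.1.trans h2.2
      by_cases heq : ∃ γ δ : Γ, a γ = b δ
      · obtain ⟨γ₀, δ₀, h0⟩ := heq
        refine ⟨a γ₀, fun γ => ⟨?_, ?_⟩⟩
        · rw [h0]; exact aleb γ δ₀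
        · exact aleb γ₀ γ
      · push_neg at heq
        have altb : ∀ γ δ : Γ, a γ < b δ := fun γ δ =>
          lt_of_le_of_ne (aleb γ δ) (heq γ δ)
        have hfip2 : ∀ s : Finset (Γ × Γ), ∃ x : K,
            ∀ p ∈ s, x ∈ Set.Ioo (a p.1) (b p.2) := by
          intro s
          rcases s.eq_empty_or_nonempty with rfl | hs
          · exact ⟨0, by simp⟩
          · obtain ⟨p₀, hp₀, hmax⟩ := s.exists_max_image (fun p => a p.1) hs
            obtain ⟨p₁, hp₁, hmin⟩ := s.exists_min_image (fun p => b p.2) hs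
            refine ⟨(a p₀.1 + b p₁.2) / 2, fun p hp => ⟨?_, ?_⟩⟩
            · have := altb p₀.1 p₁.2
              have := hmax p hp
              linarith
            · have := altb p₀.1 p₁.2
              have := hmin p hp
              linarith
        obtain ⟨x, hx⟩ := hS (Γ × Γ) (prod_card_lt huncount hΓ)
          (fun p => a p.1) (fun p => b p.2) hfip2
        exact ⟨x, fun γ => ⟨(hx (γ, γ)).1.le, (hx (γ, γ)).2.le⟩⟩
    · -- cofinality from saturation
      intro A hA
      by_cases hpos : ∃ a ∈ A, (0 : K) < a
      · set B : Set K := A ∩ Set.Ioi 0 with hB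
        have hBcard : Cardinal.mk B < κ :=
          lt_of_le_of_lt (Cardinal.mk_le_mk_of_subset Set.inter_subset_left) hA
        have hfipB : ∀ s : Finset B, ∃ x : K,
            ∀ g ∈ s, x ∈ Set.Ioo (0 : K) ((g : K)⁻¹) := by
          intro s
          rcases s.eq_empty_or_nonempty with rfl | hs
          · exact ⟨1, by simp⟩
          · obtain ⟨g₀, hg₀, hmax⟩ := s.exists_max_image (fun g => (g : K)) hs
            have hg₀pos : (0 : K) < g₀ := g₀.2.2
            refine ⟨(2 * g₀)⁻¹, fun g hg => ⟨by positivity, ?_⟩⟩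
            have hgpos : (0 : K) < g := g.2.2
            have hle : (g : K) ≤ g₀ := hmax g hg
            exact inv_lt_inv₀ (by linarith) hgpos |>.mpr (by linarith)
        obtain ⟨x, hx⟩ := hS B hBcard (fun _ => 0) (fun g => (g : K)⁻¹) hfipB
        · obtain ⟨a₀, ha₀, ha₀pos⟩ := hpos
          have hx0 : 0 < x := (hx ⟨a₀, ha₀, ha₀pos⟩).1
          refine ⟨x⁻¹, fun c hc => ?_⟩
          rcases le_or_gt c 0 with h | h
          · exact h.trans (by positivity)
          · have hxc := (hx ⟨c, hc, h⟩).2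
            have : c < x⁻¹ := by
              have := (inv_lt_inv₀ (by positivity) hx0).mpr hxc
              simpa using this
            exact this.le
      · push_neg at hpos
        exact ⟨0, fun c hc => hpos c hc⟩
  · -- converse
    rintro ⟨hC, hcof⟩ Γ hΓ a b hfip
    rcases isEmpty_or_nonempty Γ with hΓe | hΓn
    · exact ⟨0, fun γ => (IsEmpty.false γ).elim⟩
    · have altb : ∀ γ δ : Γ, a γ < b δ := by
        intro γ δ
        obtain ⟨x, hx⟩ := hfip {γ, δ}
        have h1 := hx γ (by simp)
        have h2 := hx δ (by simp)
        exact h1.1.trans h2.2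
      set S : Set K := Set.range (fun p : Γ × Γ => (b p.2 - a p.1)⁻¹) with hSdef
      have hScard : Cardinal.mk S < κ :=
        lt_of_le_of_lt (Cardinal.mk_range_le) (prod_card_lt huncount hΓ)
      obtain ⟨M, hM⟩ := hcof S hScard
      obtain ⟨γ₀⟩ := hΓn
      have hM0 : 0 < M := by
        have hmem : (b γ₀ - a γ₀)⁻¹ ∈ S := ⟨(γ₀, γ₀), rfl⟩
        have : (0 : K) < (b γ₀ - a γ₀)⁻¹ := by
          have := altb γ₀ γ₀
          exact inv_pos.mpr (by linarith)
        exact this.trans_le (hM hmem)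
      have key : ∀ γ δ : Γ, M⁻¹ ≤ b δ - a γ := by
        intro γ δ
        have hmem : (b δ - a γ)⁻¹ ∈ S := ⟨(γ, δ), rfl⟩
        have hpos : (0 : K) < b δ - a γ := by have := altb γ δ; linarith
        have hinv : (b δ - a γ)⁻¹ ≤ M := hM hmem
        calc M⁻¹ ≤ ((b δ - a γ)⁻¹)⁻¹ := by
              exact inv_le_inv₀ hM0 (by positivity) |>.mpr hinv
          _ = b δ - a γ := inv_inv _
      have he : (0 : K) < M⁻¹ / 2 := by positivity
      have hfipC : ∀ s : Finset Γ, ∃ x : K,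
          ∀ γ ∈ s, x ∈ Set.Icc (a γ + M⁻¹ / 2) (b γ - M⁻¹ / 2) := by
        intro s
        rcases s.eq_empty_or_nonempty with rfl | hs
        · exact ⟨0, by simp⟩
        · obtain ⟨δ₀, hδ₀, hmax⟩ := s.exists_max_image a hs
          refine ⟨a δ₀ + M⁻¹ / 2, fun γ hγ => ⟨by have := hmax γ hγ; linarith, ?_⟩⟩
          have := key δ₀ γ
          linarith
      obtain ⟨x, hx⟩ := hC Γ hΓ (fun γ => a γ + M⁻¹ / 2) (fun γ => b γ - M⁻¹ / 2) hfipC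
      refine ⟨x, fun γ => ⟨?_, ?_⟩⟩
      · have := (hx γ).1; linarith
      · have := (hx γ).2; linarith
end

section
/- Let K be a totally ordered field that is algebraically ℵ₁-saturated, i.e., every countable family of open intervals with the finite intersection property has nonempty intersection. Then K is sequentially complete: every Cauchy sequence in K converges (in fact, every Cauchy sequence is eventually constant). -/
/-- An algebraically ℵ₁-saturated ordered field is sequentially complete: every Cauchy
sequence converges (indeed, is eventually constant). -/
theorem aleph1_saturated_implies_sequentially_complete
    {K : Type*} [Field K] [LinearOrder K] [IsStrictOrderedRing K]
    (hsat : ∀ a b : ℕ → K,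
      (∀ s : Finset ℕ, ∃ x : K, ∀ n ∈ s, x ∈ Set.Ioo (a n) (b n)) →
      ∃ x : K, ∀ n : ℕ, x ∈ Set.Ioo (a n) (b n)) :
    ∀ x : ℕ → K,
      (∀ ε : K, 0 < ε → ∃ N : ℕ, ∀ n ≥ N, ∀ m ≥ N, |x n - x m| < ε) →
      ∃ L : K, (∀ ε : K, 0 < ε → ∃ N : ℕ, ∀ n ≥ N, |x n - L| < ε) ∧
        ∃ N : ℕ, ∀ n ≥ N, x n = L := by
  intro x hC
  set b : ℕ → K := fun k =>
    if x k.unpair.1 = x k.unpair.2 then 1 else |x k.unpair.1 - x k.unpair.2| with hb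
  have hbpos : ∀ k, 0 < b k := by
    intro k
    by_cases h : x k.unpair.1 = x k.unpair.2
    · simp [hb, h]
    · simp only [hb, h, if_false]
      exact abs_pos.mpr (sub_ne_zero.mpr h)
  have fip : ∀ s : Finset ℕ, ∃ y : K, ∀ n ∈ s, y ∈ Set.Ioo ((fun _ => (0:K)) n) (b n) := by
    intro s
    rcases s.eq_empty_or_nonempty with rfl | hs
    · exact ⟨1, by simp⟩
    · have hinf : 0 < s.inf' hs b := (Finset.lt_inf'_iff hs).mpr fun k _ => hbpos k
      refine ⟨(s.inf' hs b) / 2, fun k hk => ⟨by positivity, ?_⟩⟩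
      calc s.inf' hs b / 2 < s.inf' hs b := by linarith
        _ ≤ b k := Finset.inf'_le _ hk
  obtain ⟨ε, hε⟩ := hsat (fun _ => 0) b fip
  have hε0 : 0 < ε := (hε 0).1
  obtain ⟨N, hN⟩ := hC ε hε0
  have key : ∀ n ≥ N, x n = x N := by
    intro n hn
    by_contra h
    have h1 := (hε (Nat.pair n N)).2
    simp only [hb, Nat.unpair_pair, h, if_false] at h1
    exact absurd (hN n hn N le_rfl) (not_lt.mpr h1.le)
  exact ⟨x N, ⟨fun ε' hε' => ⟨N, fun n hn => by rw [key n hn]; simpa using hε'⟩, N, key⟩⟩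
end

section
/- Let K be a non-Archimedean totally ordered field that is Cantor κ-complete for an uncountable cardinal κ (every family of fewer than κ closed bounded intervals with the finite intersection property has nonempty intersection). Then κ ≤ card(K). -/
/-- If a non-Archimedean totally ordered field `K` is Cantor `κ`-complete for an
uncountable cardinal `κ`, then `κ ≤ card K`. -/
theorem cantor_complete_nonarchimedean_cardinality
    {K : Type} [Field K] [LinearOrder K] [IsStrictOrderedRing K] (κ : Cardinal)
    (huncount : Cardinal.aleph0 < κ)
    (hnonarch : ¬ ∀ x : K, ∃ n : ℕ, |x| ≤ n)
    (hcantor : ∀ (Γ : Type), Cardinal.mk Γ < κ → ∀ a b : Γ → K,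
      (∀ s : Finset Γ, ∃ x : K, ∀ γ ∈ s, x ∈ Set.Icc (a γ) (b γ)) →
      ∃ x : K, ∀ γ : Γ, x ∈ Set.Icc (a γ) (b γ)) :
    κ ≤ Cardinal.mk K := by
  classical
  by_contra hlt
  push_neg at hlt
  push_neg at hnonarch
  obtain ⟨x₀, hx₀⟩ := hnonarch
  set y : K := |x₀| with hy
  have hyn : ∀ n : ℕ, (n : K) < y := fun n => lt_of_not_ge (by simpa using hx₀ n)
  -- predicate: x is not positively infinite
  let P : K → Prop := fun x => ∃ n : ℕ, x ≤ (n : K)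
  let a : K → K := fun x => if P x then x else 0
  let b : K → K := fun x => if P x then y else x
  have hfip : ∀ s : Finset K, ∃ z : K, ∀ γ ∈ s, z ∈ Set.Icc (a γ) (b γ) := by
    intro s
    set t : Finset K := insert y (s.filter fun x => ¬ P x) with ht
    have hne : t.Nonempty := ⟨y, Finset.mem_insert_self _ _⟩
    refine ⟨t.min' hne, ?_⟩
    have hmem_big : ∀ w ∈ t, ∀ n : ℕ, (n : K) < w := by
      intro w hw n
      rcases Finset.mem_insert.mp hw with rfl | hw
      · exact hyn n
      · have := (Finset.mem_filter.mp hw).2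
        exact lt_of_not_ge fun h => this ⟨n, h⟩
    intro γ hγ
    by_cases hPγ : P γ
    · obtain ⟨n, hn⟩ := hPγ
      constructor
      · simp only [a]; rw [if_pos ⟨n, hn⟩]
        apply Finset.le_min'
        intro w hw
        exact hn.trans (hmem_big w hw n).le
      · simp only [b]; rw [if_pos ⟨n, hn⟩]
        exact Finset.min'_le _ _ (Finset.mem_insert_self _ _)
    · constructor
      · simp only [a, if_neg hPγ]
        apply Finset.le_min'
        intro w hw
        exact_mod_cast (hmem_big w hw 0).le
      · simp only [b, if_neg hPγ]
        exact Finset.min'_le _ _ (Finset.mem_insert.mpr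
          (Or.inr (Finset.mem_filter.mpr ⟨hγ, hPγ⟩)))
  obtain ⟨z, hz⟩ := hcantor K hlt a b hfip
  by_cases hPz : P z
  · obtain ⟨n, hn⟩ := hPz
    have hP : P ((n : K) + 1) := ⟨n + 1, le_of_eq (by push_cast; ring)⟩
    have := (hz ((n : K) + 1)).1
    simp only [a, if_pos hP] at this
    linarith
  · simp only [P, not_exists, not_le] at hPz
    have hz1 : ¬ P (z - 1) := by
      rintro ⟨n, hn⟩
      have := hPz (n + 1)
      push_cast at this
      linarith
    have := (hz (z - 1)).2
    simp only [b, if_neg hz1] at this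
    linarith
end
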